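/- Let $p > 2$, $\gamma \in (0,1)$ with $\gamma \le \frac{p-2}{p-1}$, and let $f : \mathbb{R} \to \mathbb{R}$ be a positive $C^2$ function satisfying $-(|f'|^{p-2} f')' - |f'|^{p-1} - \frac{f}{p-2} = 0$ on an open interval $I$. Then $g := f^{\gamma}$ satisfies, classically on $I$, $-(|g'|^{p-2} g')' - \frac{(1-\gamma)(p-1)}{\gamma} \frac{|g'|^{p}}{g} - |g'|^{p-1} - \frac{\gamma^{p-1}}{p-2}\, g^{(1 - (1-\gamma)(p-1))/\gamma} = 0$. -/

import Mathlib

open Real Filter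

private lemma hasDerivAt_phi {p : ℝ} (hp : 2 < p) (t : ℝ) :
    HasDerivAt (fun s : ℝ => |s| ^ (p - 2) * s) ((p - 1) * |t| ^ (p - 2)) t := by
  rcases lt_trichotomy t 0 with h | h | h
  · -- t < 0 : function eventually equals fun s => -((-s) ^ (p-1))
    have hne : (-t) ≠ 0 := neg_ne_zero.mpr h.ne
    have h1 : HasDerivAt (fun u : ℝ => u ^ (p - 1)) ((p - 1) * (-t) ^ (p - 2)) (-t) := by
      have := Real.hasDerivAt_rpow_const (p := p - 1) (x := -t) (Or.inl hne)
      convert this using 2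
      ring
    have h2 : HasDerivAt (fun s : ℝ => (-s) ^ (p - 1)) ((p - 1) * (-t) ^ (p - 2) * (-1)) t :=
      h1.comp t (hasDerivAt_neg t)
    have h3 : HasDerivAt (fun s : ℝ => -((-s) ^ (p - 1))) ((p - 1) * (-t) ^ (p - 2)) t := by
      have := h2.neg
      exact this.congr_deriv (by ring)
    have heq : (fun s : ℝ => |s| ^ (p - 2) * s) =ᶠ[nhds t] fun s : ℝ => -((-s) ^ (p - 1)) := by
      filter_upwards [Iio_mem_nhds h] with s hs
      have hs' : |s| = -s := abs_of_neg hs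
      have : (-s) ^ (p - 1) = (-s) ^ (p - 2) * (-s) := by
        rw [← Real.rpow_add_one (neg_ne_zero.mpr hs.ne)]
        congr 1; ring
      rw [hs', this]; ring
    have := h3.congr_of_eventuallyEq heq
    rwa [abs_of_neg h]
  · -- t = 0
    subst h
    have hz : (p - 1) * |(0 : ℝ)| ^ (p - 2) = 0 := by
      rw [abs_zero, Real.zero_rpow (by linarith)]; ring
    rw [hz]
    rw [hasDerivAt_iff_tendsto_slope]
    have heq : slope (fun s : ℝ => |s| ^ (p - 2) * s) 0 =ᶠ[nhdsWithin 0 {(0:ℝ)}ᶜ]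
        fun s : ℝ => |s| ^ (p - 2) := by
      filter_upwards [self_mem_nhdsWithin] with s hs
      have hs' : (s : ℝ) ≠ 0 := hs
      simp [slope, hs']
      field_simp
    rw [Filter.tendsto_congr' heq]
    have hc : ContinuousAt (fun s : ℝ => |s| ^ (p - 2)) 0 := by
      exact (Real.continuousAt_rpow_const _ _ (Or.inr (by linarith))).comp continuous_abs.continuousAt
    have := hc.continuousWithinAt (s := {(0:ℝ)}ᶜ)
    have h0 : |(0:ℝ)| ^ (p - 2) = 0 := by
      rw [abs_zero, Real.zero_rpow (by linarith)]
    rw [ContinuousWithinAt, h0] at this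
    exact this
  · -- t > 0
    have h1 : HasDerivAt (fun u : ℝ => u ^ (p - 1)) ((p - 1) * t ^ (p - 2)) t := by
      have := Real.hasDerivAt_rpow_const (p := p - 1) (x := t) (Or.inl h.ne')
      convert this using 2
      ring
    have heq : (fun s : ℝ => |s| ^ (p - 2) * s) =ᶠ[nhds t] fun s : ℝ => s ^ (p - 1) := by
      filter_upwards [Ioi_mem_nhds h] with s hs
      have hs' : |s| = s := abs_of_pos hs
      rw [hs', ← Real.rpow_add_one (ne_of_gt hs)]
      congr 1; ring
    have := h1.congr_of_eventuallyEq heq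
    rwa [abs_of_pos h]

theorem stmt_13 (p γ : ℝ) (hp : 2 < p) (hγ0 : 0 < γ) (hγ1 : γ < 1)
    (hγ2 : γ ≤ (p - 2) / (p - 1))
    (a b : ℝ) (f : ℝ → ℝ) (hf : ContDiff ℝ 2 f) (hfpos : ∀ x, 0 < f x)
    (hfeq : ∀ x ∈ Set.Ioo a b,
      -(deriv (fun y => |deriv f y| ^ (p - 2) * deriv f y) x)
        - |deriv f x| ^ (p - 1) - f x / (p - 2) = 0)
    (g : ℝ → ℝ) (hg : g = fun x => f x ^ γ) :
    ∀ x ∈ Set.Ioo a b,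
      -(deriv (fun y => |deriv g y| ^ (p - 2) * deriv g y) x)
        - (1 - γ) * (p - 1) / γ * (|deriv g x| ^ p / g x)
        - |deriv g x| ^ (p - 1)
        - γ ^ (p - 1) / (p - 2) * g x ^ ((1 - (1 - γ) * (p - 1)) / γ) = 0 := by
  intro x hx
  have hfd : Differentiable ℝ f := hf.differentiable (by norm_num)
  have hfd1 : ContDiff ℝ 1 (deriv f) := by
    have h2 : ContDiff ℝ (1 + 1 : ℕ) f := by norm_num; exact hf
    exact (contDiff_succ_iff_deriv.mp h2).2.2
  have hfd' : Differentiable ℝ (deriv f) := hfd1.differentiable one_ne_zero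
  -- derivative of g
  have hgd : ∀ y, HasDerivAt g (γ * f y ^ (γ - 1) * deriv f y) y := by
    intro y
    rw [hg]
    have := (Real.hasDerivAt_rpow_const (p := γ) (x := f y)
      (Or.inl (hfpos y).ne')).comp y (hfd y).hasDerivAt
    exact this
  have hgderiv : ∀ y, deriv g y = γ * f y ^ (γ - 1) * deriv f y := fun y => (hgd y).deriv
  set E : ℝ := (γ - 1) * (p - 1) with hE
  -- rewrite flux of g
  have hflux : (fun y => |deriv g y| ^ (p - 2) * deriv g y)
      = fun y => γ ^ (p - 1) * (f y ^ E * (|deriv f y| ^ (p - 2) * deriv f y)) := by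
    funext y
    have hfy := hfpos y
    have habs : |deriv g y| = γ * f y ^ (γ - 1) * |deriv f y| := by
      rw [hgderiv y, abs_mul, abs_mul, abs_of_pos hγ0, abs_of_pos (Real.rpow_pos_of_pos hfy _)]
    rw [habs, hgderiv y]
    rw [Real.mul_rpow (by positivity) (abs_nonneg _),
        Real.mul_rpow (by positivity) (by positivity)]
    rw [← Real.rpow_mul hfy.le]
    have e1 : γ ^ (p - 2) * γ = γ ^ (p - 1) := by
      rw [← Real.rpow_add_one hγ0.ne']; congr 1; ring
    have e2 : f y ^ ((γ - 1) * (p - 2)) * f y ^ (γ - 1) = f y ^ E := by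
      rw [← Real.rpow_add hfy]; congr 1; rw [hE]; ring
    calc γ ^ (p - 2) * f y ^ ((γ - 1) * (p - 2)) * |deriv f y| ^ (p - 2) *
          (γ * f y ^ (γ - 1) * deriv f y)
        = (γ ^ (p - 2) * γ) * (f y ^ ((γ - 1) * (p - 2)) * f y ^ (γ - 1)) *
          (|deriv f y| ^ (p - 2) * deriv f y) := by ring
      _ = γ ^ (p - 1) * (f y ^ E * (|deriv f y| ^ (p - 2) * deriv f y)) := by
          rw [e1, e2]; ring
  -- differentiability of the f-flux
  have hphi : ∀ y, HasDerivAt (fun y => |deriv f y| ^ (p - 2) * deriv f y)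
      ((p - 1) * |deriv f y| ^ (p - 2) * deriv (deriv f) y) y := by
    intro y
    exact (hasDerivAt_phi hp (deriv f y)).comp y (hfd' y).hasDerivAt
  set Φ : ℝ → ℝ := fun y => |deriv f y| ^ (p - 2) * deriv f y with hΦ
  set F : ℝ := f x with hF
  set D : ℝ := deriv f x with hD
  set A : ℝ := |D| with hA
  have hFpos : 0 < F := hfpos x
  -- value of deriv Φ x from the equation
  have hΦx : deriv Φ x = -(A ^ (p - 1)) - F / (p - 2) := by
    have := hfeq x hx
    simp only [← hΦ, ← hF, ← hD, ← hA] at this ⊢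
    linarith
  -- derivative of f ^ E
  have hu : HasDerivAt (fun y => f y ^ E) (E * F ^ (E - 1) * D) x := by
    have := (Real.hasDerivAt_rpow_const (p := E) (x := F)
      (Or.inl hFpos.ne')).comp x (hfd x).hasDerivAt
    exact this
  -- derivative of the g-flux
  have hmain : HasDerivAt (fun y => |deriv g y| ^ (p - 2) * deriv g y)
      (γ ^ (p - 1) * (E * F ^ (E - 1) * D * Φ x + F ^ E * deriv Φ x)) x := by
    rw [hflux]
    exact ((hu.mul ((hphi x).differentiableAt.hasDerivAt)).const_mul _)
  rw [hmain.deriv, hΦx]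
  have hgx : g x = F ^ γ := by rw [hg]
  have hgdx : |deriv g x| = γ * F ^ (γ - 1) * A := by
    rw [hgderiv x, abs_mul, abs_mul, abs_of_pos hγ0,
      abs_of_pos (Real.rpow_pos_of_pos hFpos _)]
  have hΦxval : Φ x = A ^ (p - 2) * D := rfl
  rw [hgx, hgdx, hΦxval]
  have hAnn : 0 ≤ A := abs_nonneg _
  have hFE : 0 < F ^ (γ - 1) := Real.rpow_pos_of_pos hFpos _
  -- identity I1 : A ^ (p-2) * D * D = A ^ p  (as D * (A^(p-2) * D))
  have hI1 : A ^ (p - 2) * D * D = A ^ p := by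
    have hDD : D * D = A * A := (abs_mul_abs_self D).symm
    have h2 : A ^ p = A ^ (p - 2) * A ^ (2 : ℝ) := by
      rw [← Real.rpow_add' hAnn (ne_of_gt (by linarith : (0:ℝ) < p - 2 + 2))]
      congr 1; ring
    have h3 : A ^ (2 : ℝ) = A * A := by
      rw [show (2:ℝ) = ((2:ℕ):ℝ) by norm_num, Real.rpow_natCast]; ring
    rw [mul_assoc, hDD, h2, h3]
  -- I2 : the |∇g|^p / g term
  have hI2 : (γ * F ^ (γ - 1) * A) ^ p / F ^ γ
      = γ * γ ^ (p - 1) * F ^ (E - 1) * A ^ p := by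
    rw [Real.mul_rpow (by positivity) hAnn, Real.mul_rpow hγ0.le hFE.le,
      ← Real.rpow_mul hFpos.le]
    have hγp : γ ^ p = γ * γ ^ (p - 1) := by
      conv_lhs => rw [show p = (p - 1) + 1 by ring]
      rw [Real.rpow_add_one hγ0.ne']; ring
    have hFe : F ^ ((γ - 1) * p) / F ^ γ = F ^ (E - 1) := by
      rw [← Real.rpow_sub hFpos]
      congr 1; rw [hE]; ring
    calc γ ^ p * F ^ ((γ - 1) * p) * A ^ p / F ^ γ
        = (γ ^ p * A ^ p) * (F ^ ((γ - 1) * p) / F ^ γ) := by ring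
      _ = γ * γ ^ (p - 1) * F ^ (E - 1) * A ^ p := by rw [hFe, hγp]; ring
  -- I3 : the |∇g|^(p-1) term
  have hI3 : (γ * F ^ (γ - 1) * A) ^ (p - 1)
      = γ ^ (p - 1) * F ^ E * A ^ (p - 1) := by
    rw [Real.mul_rpow (by positivity) hAnn, Real.mul_rpow hγ0.le hFE.le,
      ← Real.rpow_mul hFpos.le]
  -- I4 : the reaction term
  have hI4 : (F ^ γ) ^ ((1 - (1 - γ) * (p - 1)) / γ) = F ^ E * F := by
    rw [← Real.rpow_mul hFpos.le]
    have : γ * ((1 - (1 - γ) * (p - 1)) / γ) = E + 1 := by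
      rw [hE]; field_simp; ring
    rw [this, Real.rpow_add_one hFpos.ne']
  rw [hI2, hI3, hI4]
  have hcancel : D * (A ^ (p - 2) * D) = A ^ p := by rw [← hI1]; ring
  rw [show E * F ^ (E - 1) * D * (A ^ (p - 2) * D) = E * F ^ (E - 1) * (D * (A ^ (p - 2) * D)) by ring,
    hcancel]
  have hp2 : p - 2 ≠ 0 := by linarith
  field_simp
  rw [hE]
  ring
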